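/- Let B be a deterministic thrifty k-way branching program solving BT^h_2(k), with h ≥ 2 and k ≥ 2. For any input J and any internal node i of T^h, if the computation path of J visits a state q labeled with the thrifty i variable of J, then for each child j of i there is a state occurring earlier than q on the computation path of J that is labeled with the thrifty j variable of J. -/

import Mathlib

/-! Framework: the tree evaluation problem and deterministic k-way branching programs.

The balanced binary tree of height `h` has nodes numbered heap-style `1, …, 2^h - 1`:
the root is node `1` and the children of node `i` are `2i` and `2i+1`.
Elements of `[k] = {1,…,k}` are represented by `Fin k` (the element `1 ∈ [k]`
corresponds to `(0 : Fin k)`). -/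

/-- Node `i` is a leaf of the height-`h` balanced binary tree. -/
def IsLeafNode (h i : ℕ) : Prop := 2 ^ (h - 1) ≤ i ∧ i < 2 ^ h

/-- Node `i` is an internal node of the height-`h` balanced binary tree. -/
def IsInternalNode (h i : ℕ) : Prop := 1 ≤ i ∧ i < 2 ^ (h - 1)

/-- An input to the height-`h` tree evaluation problem over `[k]`: a binary function on `[k]`
for each internal node and a value in `[k]` for each leaf (values at irrelevant indices
are ignored). -/
structure TEInput (h k : ℕ) where
  f : ℕ → Fin k → Fin k → Fin k
  leaf : ℕ → Fin k

/-- Auxiliary recursion (on fuel) computing node values. -/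
def TEInput.valAux {h k : ℕ} (I : TEInput h k) : ℕ → ℕ → Fin k
  | 0, i => I.leaf i
  | m + 1, i =>
      if 2 ^ (h - 1) ≤ i then I.leaf i
      else I.f i (I.valAux m (2 * i)) (I.valAux m (2 * i + 1))

/-- The value `v_i^I` of node `i`: the leaf value if `i` is a leaf, and
`f_i^I (v_{2i}^I, v_{2i+1}^I)` if `i` is an internal node. -/
def TEInput.val {h k : ℕ} (I : TEInput h k) (i : ℕ) : Fin k := I.valAux h i

/-- The input variables of the tree evaluation problem: one variable `f_i(a,b)` for each
internal node `i` and `a b ∈ [k]`, and one variable `l_i` for each leaf `i`. -/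
inductive TEVar (h k : ℕ) where
  | internal (i : ℕ) (hi : IsInternalNode h i) (a b : Fin k) : TEVar h k
  | leaf (i : ℕ) (hi : IsLeafNode h i) : TEVar h k

/-- The value of a variable under an input. -/
def TEInput.evalVar {h k : ℕ} (I : TEInput h k) : TEVar h k → Fin k
  | .internal i _ a b => I.f i a b
  | .leaf i _ => I.leaf i

/-- The node a variable belongs to. -/
def TEVar.node {h k : ℕ} : TEVar h k → ℕ
  | .internal i _ _ _ => i
  | .leaf i _ => i

/-- `X` is the thrifty `i` variable of input `I`: it is `f_i(v_{2i}^I, v_{2i+1}^I)`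
if `i` is an internal node, and `l_i` if `i` is a leaf. -/
def IsThriftyVarOf {h k : ℕ} (I : TEInput h k) (i : ℕ) : TEVar h k → Prop
  | .internal j _ a b => j = i ∧ a = I.val (2 * j) ∧ b = I.val (2 * j + 1)
  | .leaf j _ => j = i

/-- A deterministic `k`-way branching program with variables indexed by `V` and
output set `R`: a set of states (of cardinality `size`), a start state, each state
labeled either with a variable to query (non-output states, with `k` out-edges
labeled `1,…,k`) or with an output value (output sink states). -/
structure DetBP (V : Type) (k : ℕ) (R : Type) where
  size : ℕ
  start : Fin size
  label : Fin size → V ⊕ R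
  next : Fin size → Fin k → Fin size

namespace DetBP

variable {V : Type} {k : ℕ} {R : Type}

/-- One step of computation on input `x`: from a state querying variable `v`, follow
the out-edge labeled `x v`; output states are sinks. -/
def step (B : DetBP V k R) (x : V → Fin k) (s : Fin B.size) : Fin B.size :=
  match B.label s with
  | .inl v => B.next s (x v)
  | .inr _ => s

/-- The state of the computation path of `x` at time `t`. -/
def run (B : DetBP V k R) (x : V → Fin k) (t : ℕ) : Fin B.size :=
  (B.step x)^[t] B.start

/-- The depth of `B` is at most `D`: on every input, the computation path reaches an
output state within its first `D` states. -/
def DepthLE (B : DetBP V k R) (D : ℕ) : Prop :=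
  ∀ x : V → Fin k, ∃ t < D, (B.label (B.run x t)).isRight = true

/-- `B` solves the function tree evaluation problem `FT^h_2(k)`: on every input `I`, the
computation path ends in the output state labeled with the root value `v_1^I`. -/
def SolvesFT {h : ℕ} (B : DetBP (TEVar h k) k (Fin k)) : Prop :=
  ∀ I : TEInput h k, ∃ t, B.label (B.run I.evalVar t) = Sum.inr (I.val 1)

/-- `B` solves the decision tree evaluation problem `BT^h_2(k)`: on every input `I`, the
computation path ends in the output state labeled with whether `v_1^I = 1`
(the element `1 ∈ [k]` being `(0 : Fin k)`). -/
def SolvesBT {h : ℕ} (B : DetBP (TEVar h k) k Bool) : Prop :=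
  ∀ I : TEInput h k, ∃ t, B.label (B.run I.evalVar t) = Sum.inr (decide ((I.val 1 : Fin k).val = 0))

/-- `B` is thrifty: on every input `I`, every query `f_i(a,b)` made along the computation
path of `I` satisfies `a = v_{2i}^I` and `b = v_{2i+1}^I`. -/
def Thrifty {h : ℕ} (B : DetBP (TEVar h k) k R) : Prop :=
  ∀ (I : TEInput h k) (t i : ℕ) (hi : IsInternalNode h i) (a b : Fin k),
    B.label (B.run I.evalVar t) = Sum.inl (TEVar.internal i hi a b) →
    a = I.val (2 * i) ∧ b = I.val (2 * i + 1)

end DetBP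

/-- Let `B` be a deterministic thrifty `k`-way branching program solving
`BT^h_2(k)` (`h ≥ 2`, `k ≥ 2`). For any input `J` and internal node `i`, if the computation
path of `J` visits a state labeled with the thrifty `i` variable of `J` at time `t`, then
for each child `j` of `i` there is an earlier time `s < t` at which the computation path of
`J` is at a state labeled with the thrifty `j` variable of `J`. -/
def InSub (m j : ℕ) : Prop := ∃ d, m * 2 ^ d ≤ j ∧ j < (m + 1) * 2 ^ d

lemma valAux_succ {h k : ℕ} (J : TEInput h k) (n i : ℕ) :
    J.valAux (n + 1) i =
      if 2 ^ (h - 1) ≤ i then J.leaf i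
      else J.f i (J.valAux n (2 * i)) (J.valAux n (2 * i + 1)) := rfl

lemma valAux_zero {h k : ℕ} (J : TEInput h k) (i : ℕ) : J.valAux 0 i = J.leaf i := rfl

lemma valAux_stable {h k : ℕ} (J : TEInput h k) :
    ∀ n i, 2 ^ (h - 1) ≤ i * 2 ^ n → ∀ m, J.valAux (n + m) i = J.valAux n i := by
  intro n
  induction n with
  | zero =>
    intro i hi m
    simp only [pow_zero, mul_one] at hi
    induction m with
    | zero => rfl
    | succ m ih =>
      simp only [Nat.zero_add] at ih ⊢
      rw [valAux_succ J m i, if_pos hi, valAux_zero]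
  | succ n ih =>
    intro i hi m
    cases m with
    | zero => rfl
    | succ m =>
      have e : n + 1 + (m + 1) = (n + m + 1) + 1 := by omega
      rw [e, valAux_succ J (n + m + 1) i, valAux_succ J n i]
      by_cases hl : 2 ^ (h - 1) ≤ i
      · rw [if_pos hl, if_pos hl]
      · rw [if_neg hl, if_neg hl]
        have hp : 0 < 2 ^ n := pow_pos (by norm_num) n
        have h2 : 2 ^ (h - 1) ≤ 2 * i * 2 ^ n := by
          rw [pow_succ] at hi; nlinarith [hi]
        have h3 : 2 ^ (h - 1) ≤ (2 * i + 1) * 2 ^ n := by nlinarith [h2, hp]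
        have e2 : n + m + 1 = n + (m + 1) := by omega
        rw [e2, ih (2 * i) h2, ih (2 * i + 1) h3]

lemma val_leaf {h k : ℕ} (hh : 1 ≤ h) (J : TEInput h k) {i : ℕ} (hi : 2 ^ (h - 1) ≤ i) :
    J.val i = J.leaf i := by
  obtain ⟨m, rfl⟩ : ∃ m, h = m + 1 := ⟨h - 1, by omega⟩
  show J.valAux (m + 1) i = _
  rw [valAux_succ, if_pos hi]

lemma val_internal {h k : ℕ} (J : TEInput h k) {i : ℕ} (h1 : 1 ≤ i) (h2 : i < 2 ^ (h - 1)) :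
    J.val i = J.f i (J.val (2 * i)) (J.val (2 * i + 1)) := by
  have hh : 1 ≤ h := by
    by_contra hc
    push_neg at hc
    interval_cases h
    norm_num at h2
    omega
  obtain ⟨m, rfl⟩ : ∃ m, h = m + 1 := ⟨h - 1, by omega⟩
  have hm : (2 : ℕ) ^ (m + 1 - 1) = 2 ^ m := rfl
  have hp : 0 < 2 ^ m := pow_pos (by norm_num) m
  show J.valAux (m + 1) i = J.f i (J.valAux (m + 1) (2 * i)) (J.valAux (m + 1) (2 * i + 1))
  rw [valAux_succ, if_neg (by rw [hm]; omega)]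
  have s1 : J.valAux (m + 1) (2 * i) = J.valAux m (2 * i) := by
    have := valAux_stable J m (2 * i) (by rw [hm]; nlinarith [hp]) 1
    simpa using this
  have s2 : J.valAux (m + 1) (2 * i + 1) = J.valAux m (2 * i + 1) := by
    have := valAux_stable J m (2 * i + 1) (by rw [hm]; nlinarith [hp]) 1
    simpa using this
  rw [s1, s2]

lemma valAux_congr {h k : ℕ} (J J' : TEInput h k) (j : ℕ)
    (hf : ∀ m, m ≠ j → ∀ a b, J'.f m a b = J.f m a b)
    (hl : ∀ m, m ≠ j → J'.leaf m = J.leaf m) :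
    ∀ fuel m, ¬ InSub m j → J'.valAux fuel m = J.valAux fuel m := by
  intro fuel
  induction fuel with
  | zero =>
    intro m hm
    exact hl m (fun e => hm ⟨0, by omega⟩)
  | succ n ih =>
    intro m hm
    have hmj : m ≠ j := fun e => hm ⟨0, by omega⟩
    have hsub : ∀ r : ℕ, r ≤ 1 → InSub (2 * m + r) j → InSub m j := by
      rintro r hr ⟨d, hd1, hd2⟩
      have hp : 0 < 2 ^ d := pow_pos (by norm_num) d
      refine ⟨d + 1, ?_, ?_⟩ <;> rw [pow_succ] <;> nlinarith [hd1, hd2, hp]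
    rw [valAux_succ, valAux_succ]
    by_cases hle : 2 ^ (h - 1) ≤ m
    · rw [if_pos hle, if_pos hle]; exact hl m hmj
    · rw [if_neg hle, if_neg hle]
      rw [hf m hmj, ih (2 * m) (fun hc => hm (hsub 0 (by norm_num) (by simpa using hc))),
        ih (2 * m + 1) (fun hc => hm (hsub 1 le_rfl hc))]

lemma run_succ {V : Type} {k : ℕ} {R : Type} (B : DetBP V k R) (x : V → Fin k) (t : ℕ) :
    B.run x (t + 1) = B.step x (B.run x t) := Function.iterate_succ_apply' _ _ _

theorem stmt_8 (h k : ℕ) (hh : 2 ≤ h) (hk : 2 ≤ k) (B : DetBP (TEVar h k) k Bool)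
    (hB : B.SolvesBT) (hthrifty : B.Thrifty) (J : TEInput h k)
    (i : ℕ) (hi : IsInternalNode h i) :
    ∀ (t : ℕ) (X : TEVar h k),
      B.label (B.run J.evalVar t) = Sum.inl X → IsThriftyVarOf J i X →
      ∀ j : ℕ, j = 2 * i ∨ j = 2 * i + 1 →
        ∃ s < t, ∃ Y : TEVar h k,
          B.label (B.run J.evalVar s) = Sum.inl Y ∧ IsThriftyVarOf J j Y := by
  intro t X hX hXthr j hj
  by_contra hcon
  push_neg at hcon
  -- `X` must be an internal variable at node `i`
  obtain ⟨i', hi', a, b⟩ := X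
  case leaf j' hj' =>
    have : j' = i := hXthr
    subst this
    exact absurd hi.2 (not_lt.mpr hj'.1)
  obtain ⟨rfl, ha, hb⟩ : i' = i ∧ a = J.val (2 * i') ∧ b = J.val (2 * i' + 1) := hXthr
  have hj1 : 1 ≤ j := by have := hi.1; omega
  -- the modified value
  haveI : NeZero k := ⟨by omega⟩
  set c : Fin k := J.val j + 1 with hc
  have hcne : c ≠ J.val j := by
    intro e
    have h10 : (1 : Fin k) = 0 := add_eq_left.mp e
    rw [Fin.one_eq_zero_iff] at h10
    omega
  -- the modified input
  set J' : TEInput h k :=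
    ⟨fun m a b => if m = j ∧ a = J.val (2 * j) ∧ b = J.val (2 * j + 1) then c else J.f m a b,
     fun m => if m = j then c else J.leaf m⟩ with hJ'
  have hf' : ∀ m, m ≠ j → ∀ a b, J'.f m a b = J.f m a b := by
    intro m hm a b
    simp only [hJ']
    rw [if_neg (by tauto)]
  have hl' : ∀ m, m ≠ j → J'.leaf m = J.leaf m := by
    intro m hm
    simp only [hJ']
    rw [if_neg hm]
  have hvals : ∀ m, ¬ InSub m j → J'.val m = J.val m := fun m hm =>
    valAux_congr J J' j hf' hl' h m hm
  have hnotin : ∀ r : ℕ, ¬ InSub (2 * j + r) j := by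
    rintro r ⟨d, hd1, hd2⟩
    have hp : 0 < 2 ^ d := pow_pos (by norm_num) d
    nlinarith [hd1, hp, hj1]
  -- the value of node j changes to c
  have hvalj : J'.val j = c := by
    by_cases hleaf : 2 ^ (h - 1) ≤ j
    · rw [val_leaf (by omega) J' hleaf]
      simp only [hJ']
      simp
    · push_neg at hleaf
      rw [val_internal J' hj1 hleaf]
      rw [hvals (2 * j) (by simpa using hnotin 0), hvals (2 * j + 1) (hnotin 1)]
      simp only [hJ']
      simp
  -- the runs agree up to time t
  have hrun : ∀ s, s ≤ t → B.run J'.evalVar s = B.run J.evalVar s := by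
    intro s
    induction s with
    | zero => intro _; rfl
    | succ s ih =>
      intro hs
      have hst : s < t := by omega
      rw [run_succ, run_succ, ih (by omega)]
      set q := B.run J.evalVar s with hq
      cases hlq : B.label q with
      | inr r => simp [DetBP.step, hlq]
      | inl Y =>
        have hnotthr : ¬ IsThriftyVarOf J j Y := hcon s hst Y hlq
        have : J'.evalVar Y = J.evalVar Y := by
          obtain ⟨m, hm, a', b'⟩ := Y
          case leaf m hm =>
            have hmj : m ≠ j := hnotthr
            exact hl' m hmj
          · show J'.f m a' b' = J.f m a' b'
            simp only [hJ']
            rw [if_neg]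
            rintro ⟨rfl, e2, e3⟩
            exact hnotthr ⟨rfl, e2, e3⟩
        simp [DetBP.step, hlq, this]
  -- apply thriftiness to J' at time t
  have hX' : B.label (B.run J'.evalVar t) = Sum.inl (TEVar.internal i' hi' a b) := by
    rw [hrun t le_rfl]; exact hX
  obtain ⟨ha', hb'⟩ := hthrifty J' t i' hi' a b hX'
  rcases hj with rfl | rfl
  · exact hcne (by rw [← hvalj, ← ha']; exact ha)
  · exact hcne (by rw [← hvalj, ← hb']; exact hb)
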